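/- Let (φ_W, T) satisfy either: 0 < T < π/2 and π/2 < φ_W < π − T (i.e., (φ_W, T) ∈ D₁ with φ_W ≠ π/2), or: 0 < T ≤ π/2, π − T < φ_W < π and T ≤ −tan φ_W (i.e., (φ_W, T) ∈ D₂' ∪ D₂''). Then F²_{φ_W,T} has no positive roots: F²_{φ_W,T}(a) ≠ 0 for all a > 0. -/

import Mathlib

open Real

/-- The determinant function
`F²_{φ_W,T}(a) = -a² sinh(2aT) sin(2φ_W) + 2a (1 - cosh(2aT) cos(2φ_W)) + sinh(2aT) sin(2φ_W)`. -/
noncomputable def F2 (φW T a : ℝ) : ℝ :=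
  -a ^ 2 * Real.sinh (2 * a * T) * Real.sin (2 * φW)
    + 2 * a * (1 - Real.cosh (2 * a * T) * Real.cos (2 * φW))
    + Real.sinh (2 * a * T) * Real.sin (2 * φW)

/-- The hyperbolic cotangent `coth x = cosh x / sinh x` (not available in Mathlib). -/
noncomputable def Real.coth (x : ℝ) : ℝ := Real.cosh x / Real.sinh x

/-- `sinh x < x * cosh x` for `x > 0`. -/
lemma sinh_lt_mul_cosh {x : ℝ} (hx : 0 < x) : Real.sinh x < x * Real.cosh x := by
  have hderiv : ∀ y : ℝ, HasDerivAt (fun t => t * Real.cosh t - Real.sinh t)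
      (y * Real.sinh y) y := by
    intro y
    have h1 : HasDerivAt (fun t : ℝ => t * Real.cosh t) (1 * Real.cosh y + y * Real.sinh y) y :=
      (hasDerivAt_id y).mul (Real.hasDerivAt_cosh y)
    have h2 := h1.sub (Real.hasDerivAt_sinh y)
    exact h2.congr_deriv (by ring)
  have hmono : StrictMonoOn (fun t => t * Real.cosh t - Real.sinh t) (Set.Ici (0 : ℝ)) := by
    apply strictMonoOn_of_deriv_pos (convex_Ici 0)
    · exact (Continuous.sub (continuous_id.mul Real.continuous_cosh)
        Real.continuous_sinh).continuousOn
    · intro y hy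
      rw [interior_Ici] at hy
      rw [(hderiv y).deriv]
      exact mul_pos hy (Real.sinh_pos_iff.2 hy)
  have := hmono (Set.self_mem_Ici) (Set.mem_Ici.2 hx.le) hx
  simpa using this

theorem F2_no_positive_roots (φW T : ℝ)
    (h : (0 < T ∧ T < Real.pi / 2 ∧ Real.pi / 2 < φW ∧ φW < Real.pi - T) ∨
         (0 < T ∧ T ≤ Real.pi / 2 ∧ Real.pi - T < φW ∧ φW < Real.pi ∧ T ≤ -Real.tan φW)) :
    ∀ a : ℝ, 0 < a → F2 φW T a ≠ 0 := by
  have hπ := Real.pi_pos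
  -- extract the key facts: 0 < T, sin φW > 0, cos φW < 0, 0 ≤ sin φW + T * cos φW
  obtain ⟨hT, hp, hq, hpq⟩ :
      0 < T ∧ 0 < Real.sin φW ∧ Real.cos φW < 0 ∧
        0 ≤ Real.sin φW + T * Real.cos φW := by
    rcases h with ⟨hT, hT2, hφ1, hφ2⟩ | ⟨hT, hT2, hφ1, hφ2, hTtan⟩
    · have hφpos : 0 < φW := lt_trans (by linarith) hφ1
      have hφltπ : φW < Real.pi := by linarith
      have hp : 0 < Real.sin φW := Real.sin_pos_of_pos_of_lt_pi hφpos hφltπ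
      have hq : Real.cos φW < 0 :=
        Real.cos_neg_of_pi_div_two_lt_of_lt hφ1 (by linarith)
      -- T < -tan φW  since T < π - φW < π/2 and t < tan t
      have h1 : 0 < Real.pi - φW := by linarith
      have h2 : Real.pi - φW < Real.pi / 2 := by linarith
      have h3 : Real.pi - φW < Real.tan (Real.pi - φW) := Real.lt_tan h1 h2
      have h4 : T < -Real.tan φW := by
        rw [← Real.tan_pi_sub]; linarith
      rw [Real.tan_eq_sin_div_cos] at h4
      have hq' : Real.cos φW ≠ 0 := ne_of_lt hq
      have h5 : -(Real.sin φW / Real.cos φW) * Real.cos φW < T * Real.cos φW :=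
        mul_lt_mul_of_neg_right h4 hq
      rw [neg_mul, div_mul_cancel₀ _ hq'] at h5
      exact ⟨hT, hp, hq, by linarith⟩
    · have hφ1' : Real.pi / 2 ≤ Real.pi - T := by linarith
      have hφpos : 0 < φW := by linarith
      have hp : 0 < Real.sin φW := Real.sin_pos_of_pos_of_lt_pi hφpos hφ2
      have hq : Real.cos φW < 0 :=
        Real.cos_neg_of_pi_div_two_lt_of_lt (by linarith) (by linarith)
      rw [Real.tan_eq_sin_div_cos] at hTtan
      have hq' : Real.cos φW ≠ 0 := ne_of_lt hq
      have h5 : -(Real.sin φW / Real.cos φW) * Real.cos φW ≤ T * Real.cos φW :=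
        mul_le_mul_of_nonpos_right hTtan hq.le
      rw [neg_mul, div_mul_cancel₀ _ hq'] at h5
      exact ⟨hT, hp, hq, by linarith⟩
  intro a ha
  set s := Real.sinh (a * T) with hs_def
  set c := Real.cosh (a * T) with hc_def
  set p := Real.sin φW with hp_def
  set q := Real.cos φW with hq_def
  have hs : 0 < s := Real.sinh_pos_iff.2 (mul_pos ha hT)
  have hc : 0 < c := Real.cosh_pos (a * T)
  have hkey : s < (a * T) * c := sinh_lt_mul_cosh (mul_pos ha hT)
  -- factorization: F2 = 4 * (a c p + s q) * (c p - a s q)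
  have hfact : F2 φW T a = 4 * (a * c * p + s * q) * (c * p - a * s * q) := by
    have h2aT : 2 * a * T = 2 * (a * T) := by ring
    have hpyth : p ^ 2 + q ^ 2 = 1 := Real.sin_sq_add_cos_sq φW
    have hhyp : c ^ 2 - s ^ 2 = 1 := Real.cosh_sq_sub_sinh_sq (a * T)
    unfold F2
    rw [h2aT, Real.sinh_two_mul, Real.cosh_two_mul, Real.sin_two_mul, Real.cos_two_mul,
      ← hs_def, ← hc_def, ← hp_def, ← hq_def]
    linear_combination (-(4 * a * c ^ 2)) * hpyth + (-(2 * a)) * hhyp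
  -- first factor positive
  have hG : 0 < a * c * p + s * q := by
    have h1 : (a * T * c) * q < s * q := mul_lt_mul_of_neg_right hkey hq
    have h2 : 0 ≤ (a * c) * (p + T * q) := mul_nonneg (mul_pos ha hc).le hpq
    nlinarith
  -- second factor positive
  have hH : 0 < c * p - a * s * q := by
    have h1 : a * s * q < 0 := mul_neg_of_pos_of_neg (mul_pos ha hs) hq
    nlinarith [mul_pos hc hp]
  rw [hfact]
  positivity
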